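/- The supremum over real θ₁, θ₂ of |1 + e^{iθ₁} + e^{iθ₂} − e^{i(θ₁+θ₂)}| equals 2√2. -/

import Mathlib

lemma tsirelson_ub (θ₁ θ₂ : ℝ) :
    ‖1 + Complex.exp (Complex.I * θ₁) +
        Complex.exp (Complex.I * θ₂) -
        Complex.exp (Complex.I * (θ₁ + θ₂))‖ ≤ 2 * Real.sqrt 2 := by
  set w := Complex.exp (Complex.I * θ₁) with hw
  set z := Complex.exp (Complex.I * θ₂) with hz
  have hwz : Complex.exp (Complex.I * (θ₁ + θ₂)) = w * z := by
    rw [hw, hz, ← Complex.exp_add]; ring_nf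
  have habsw : ‖w‖ = 1 := by
    rw [hw, mul_comm, Complex.norm_exp_ofReal_mul_I]
  have habsz : ‖z‖ = 1 := by
    rw [hz, mul_comm, Complex.norm_exp_ofReal_mul_I]
  have hsplit : 1 + w + z - w * z = (1 + z) + w * (1 - z) := by ring
  rw [hwz, hsplit]
  have h1 : ‖(1 + z) + w * (1 - z)‖ ≤
      ‖1 + z‖ + ‖1 - z‖ := by
    calc ‖(1 + z) + w * (1 - z)‖ ≤
        ‖1 + z‖ + ‖w * (1 - z)‖ := norm_add_le _ _
      _ = ‖1 + z‖ + ‖1 - z‖ := by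
          rw [norm_mul, habsw, one_mul]
  set a := ‖1 + z‖
  set b := ‖1 - z‖
  have ha : 0 ≤ a := norm_nonneg _
  have hb : 0 ≤ b := norm_nonneg _
  have hsq : a ^ 2 + b ^ 2 = 4 := by
    have := Complex.sq_norm (1 + z)
    have := Complex.sq_norm (1 - z)
    have h1 : Complex.normSq (1 + z) + Complex.normSq (1 - z) =
        2 + 2 * Complex.normSq z := by
      simp [Complex.normSq_apply, Complex.add_re, Complex.add_im, Complex.sub_re,
        Complex.sub_im]
      ring
    have hz2 : Complex.normSq z = 1 := by
      have := Complex.sq_norm z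
      rw [habsz] at this; linarith [this]
    have : a ^ 2 + b ^ 2 = Complex.normSq (1 + z) + Complex.normSq (1 - z) := by
      simp [a, b, ← Complex.sq_norm]
    rw [this, h1, hz2]; norm_num
  have hs : Real.sqrt 2 ^ 2 = 2 := Real.sq_sqrt (by norm_num)
  have hsnn : 0 ≤ Real.sqrt 2 := Real.sqrt_nonneg 2
  nlinarith [sq_nonneg (a - b), sq_nonneg (a + b - 2 * Real.sqrt 2)]

/-- Tsirelson's bound via the Werner–Wolf formula: the supremum over real
phases `θ₁, θ₂` of `|1 + e^{iθ₁} + e^{iθ₂} − e^{i(θ₁+θ₂)}|` equals `2√2`. -/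
theorem tsirelson_bound_phase_formula :
    sSup {x : ℝ | ∃ θ₁ θ₂ : ℝ,
      x = ‖1 + Complex.exp (Complex.I * θ₁) +
        Complex.exp (Complex.I * θ₂) -
        Complex.exp (Complex.I * (θ₁ + θ₂))‖} = 2 * Real.sqrt 2 := by
  apply le_antisymm
  · apply csSup_le
    · exact ⟨‖1 + Complex.exp (Complex.I * 0) +
        Complex.exp (Complex.I * 0) - Complex.exp (Complex.I * (0 + 0))‖, 0, 0, rfl⟩
    · rintro x ⟨θ₁, θ₂, rfl⟩
      exact tsirelson_ub θ₁ θ₂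
  · apply le_csSup
    · exact ⟨2 * Real.sqrt 2, by rintro x ⟨θ₁, θ₂, rfl⟩; exact tsirelson_ub θ₁ θ₂⟩
    · refine ⟨Real.pi / 2, Real.pi / 2, ?_⟩
      have he : Complex.exp (Complex.I * (Real.pi / 2 : ℝ)) = Complex.I := by
        rw [mul_comm, Complex.exp_mul_I]
        push_cast
        rw [Complex.cos_pi_div_two, Complex.sin_pi_div_two]
        ring
      have he2 : Complex.exp (Complex.I * ((Real.pi / 2 : ℝ) + (Real.pi / 2 : ℝ))) = -1 := by
        have : ((Real.pi / 2 : ℝ) + (Real.pi / 2 : ℝ) : ℂ) = (Real.pi : ℂ) := by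
          push_cast; ring
        rw [this, mul_comm, Complex.exp_pi_mul_I]
      rw [he, he2]
      have : (1 : ℂ) + Complex.I + Complex.I - (-1) = 2 + 2 * Complex.I := by ring
      rw [this]
      rw [show (2 : ℂ) + 2 * Complex.I = 2 * (1 + Complex.I) by ring, norm_mul]
      simp [Complex.norm_def, Complex.normSq_apply]
      norm_num
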